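/- Let A be a ring and (A_i)_{i∈I} a nonempty family of subrings of A that is directed by inclusion and satisfies A = ⋃_{i∈I} A_i. Then for every finitely presented right A-module M there exist an index i ∈ I, natural numbers m and k, and a k × m matrix with all entries in A_i, such that M is isomorphic to the cokernel of the right A-linear map A^m → A^k given by left multiplication by this matrix. -/
import Mathlib


universe u v

open MulOpposite

/-- The right `A`-linear map `A^m → A^k` given by left multiplication by the
`k × m` matrix `T`; here right `A`-modules are `Aᵐᵒᵖ`-modules. -/
def Matrix.leftMulVecLin {A : Type u} [Ring A] {k m : ℕ} (T : Matrix (Fin k) (Fin m) A) :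
    (Fin m → A) →ₗ[Aᵐᵒᵖ] (Fin k → A) where
  toFun v := fun j => ∑ l, T j l * v l
  map_add' v w := by
    funext j
    simp [mul_add, Finset.sum_add_distrib]
  map_smul' c v := by
    funext j
    simp only [Pi.smul_apply, MulOpposite.smul_eq_mul_unop, RingHom.id_apply]
    rw [Finset.sum_mul]
    simp [mul_assoc]

/-- The `Aᵐᵒᵖ`-linear equivalence `(Fin k → Aᵐᵒᵖ) ≃ (Fin k → A)` given by `unop`. -/
def unopPiEquiv {A : Type u} [Ring A] (k : ℕ) :
    (Fin k → Aᵐᵒᵖ) ≃ₗ[Aᵐᵒᵖ] (Fin k → A) where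
  toFun v := fun j => unop (v j)
  invFun v := fun j => op (v j)
  left_inv v := rfl
  right_inv v := rfl
  map_add' v w := rfl
  map_smul' c v := by
    funext j
    simp [MulOpposite.smul_eq_mul_unop, unop_mul]

/-- If `A` is the union of a nonempty directed family of subrings `(A_i)`,
then every finitely presented right `A`-module is isomorphic to the cokernel of left
multiplication by a matrix all of whose entries lie in some `A_i`. -/
theorem finitePresentation_matrix_entries_in_directed_union
    {A : Type u} [Ring A] {ι : Type v} [Nonempty ι]
    (S : ι → Subring A) (hdir : Directed (· ≤ ·) S)
    (hunion : ∀ a : A, ∃ i, a ∈ S i)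
    (M : Type u) [AddCommGroup M] [Module Aᵐᵒᵖ M]
    (hM : Module.FinitePresentation Aᵐᵒᵖ M) :
    ∃ (i : ι) (k m : ℕ) (T : Matrix (Fin k) (Fin m) A),
      (∀ j l, T j l ∈ S i) ∧
      Nonempty (M ≃ₗ[Aᵐᵒᵖ] ((Fin k → A) ⧸ LinearMap.range (Matrix.leftMulVecLin T))) := by
  classical
  obtain ⟨k, f, hf⟩ := Module.Finite.exists_fin' Aᵐᵒᵖ M
  have hker : (LinearMap.ker f).FG := Module.FinitePresentation.fg_ker f hf
  obtain ⟨m, g, hg⟩ := Submodule.fg_iff_exists_fin_generating_family.mp hker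
  set e := unopPiEquiv (A := A) k with he
  -- the matrix
  set T : Matrix (Fin k) (Fin m) A := fun j l => unop (g l j) with hT
  -- key: range of leftMulVecLin T = image of ker f under e
  have hrange : LinearMap.range (Matrix.leftMulVecLin T)
      = (LinearMap.ker f).map (e : (Fin k → Aᵐᵒᵖ) →ₗ[Aᵐᵒᵖ] (Fin k → A)) := by
    rw [← hg, Submodule.map_span, ← Set.range_comp]
    ext x
    rw [Submodule.mem_span_range_iff_exists_fun]
    constructor
    · rintro ⟨v, rfl⟩
      refine ⟨fun l => op (v l), ?_⟩
      funext j
      simp only [Matrix.leftMulVecLin, LinearMap.coe_mk, AddHom.coe_mk]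
      rw [Finset.sum_apply]
      simp only [Pi.smul_apply, MulOpposite.smul_eq_mul_unop, hT, unop_op]
      rfl
    · rintro ⟨c, rfl⟩
      refine ⟨fun l => unop (c l), ?_⟩
      funext j
      simp only [Matrix.leftMulVecLin, LinearMap.coe_mk, AddHom.coe_mk]
      rw [Finset.sum_apply]
      simp only [Pi.smul_apply, MulOpposite.smul_eq_mul_unop, hT]
      rfl
  -- choose a common index for the finitely many entries
  choose idx hidx using fun p : Fin k × Fin m => hunion (T p.1 p.2)
  obtain ⟨i, hi⟩ := hdir.finset_le (Finset.univ.image idx)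
  refine ⟨i, k, m, T, fun j l => hi (idx (j, l))
    (Finset.mem_image_of_mem idx (Finset.mem_univ _)) (hidx (j, l)), ?_⟩
  exact ⟨((LinearMap.quotKerEquivOfSurjective f hf).symm.trans
    (Submodule.Quotient.equiv (LinearMap.ker f)
      (LinearMap.range (Matrix.leftMulVecLin T)) e hrange.symm))⟩
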